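/- If a monoid M satisfies Property (C_3), then whenever M satisfies an identity x^{m1} t_1 x^{m2} t_2 x^{m3} ≈ v (with m1,m2,m3 ≥ 1 and t_1, t_2, x distinct variables), the word v has the form x^{n1} t_1 x^{n2} t_2 x^{n3} for some positive integers n1, n2, n3. -/

import Mathlib

/-- Two words have the same type: equal up to changing the positive exponents of
their maximal single-letter blocks. -/
def SameType {α : Type*} (u v : List α) : Prop :=
  ∃ L : List (α × ℕ × ℕ),
    (∀ p ∈ L, 0 < p.2.1 ∧ 0 < p.2.2) ∧
    List.Chain' (fun p q => p.1 ≠ q.1) L ∧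
    u = L.flatMap (fun p => List.replicate p.2.1 p.1) ∧
    v = L.flatMap (fun p => List.replicate p.2.2 p.1)

/-- The height of a word: the number of islands (maximal one-letter power factors). -/
def height {α : Type*} [DecidableEq α] (u : List α) : ℕ :=
  (u.destutter (· ≠ ·)).length

/-- A monoid M satisfies the identity u ≈ v (words in countably many variables). -/
def SatM (M : Type*) [Monoid M] (u v : List ℕ) : Prop :=
  ∀ θ : ℕ → M, (u.map θ).prod = (v.map θ).prod

/-- Property (C_ℓ): every word over a two-letter alphabet {x,y} of height at most ℓ
can form an identity of M only with a word of the same type. -/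
def PropC (M : Type*) [Monoid M] (ℓ : ℕ) : Prop :=
  ∀ x y : ℕ, x ≠ y → ∀ u v : List ℕ, u ≠ [] → (∀ z ∈ u, z = x ∨ z = y) →
    height u ≤ ℓ → SatM M u v → SameType u v

open List

section Aux

lemma prod_flatMap_eq {M : Type*} [Monoid M] (σ : ℕ → List ℕ) (θ : ℕ → M) :
    ∀ u : List ℕ, ((u.flatMap σ).map θ).prod = (u.map fun z => ((σ z).map θ).prod).prod := by
  intro u; induction u with
  | nil => simp
  | cons a t ih => simp [ih]

lemma satM_subst {M : Type*} [Monoid M] {u v : List ℕ} (h : SatM M u v) (σ : ℕ → List ℕ) :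
    SatM M (u.flatMap σ) (v.flatMap σ) := by
  intro θ
  rw [prod_flatMap_eq, prod_flatMap_eq]
  exact h _

lemma satM_symm {M : Type*} [Monoid M] {u v : List ℕ} (h : SatM M u v) : SatM M v u :=
  fun θ => (h θ).symm

lemma flatMap_rep (f : ℕ → List ℕ) {a b : ℕ} (h : f a = [b]) :
    ∀ n, (List.replicate n a).flatMap f = List.replicate n b := by
  intro n; induction n with
  | zero => simp
  | succ n ih => simp [List.replicate_succ, h, ih]

lemma flatMap_rep_nil (f : ℕ → List ℕ) {a : ℕ} (h : f a = []) :
    ∀ n, (List.replicate n a).flatMap f = [] := by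
  intro n; induction n with
  | zero => simp
  | succ n ih => simp [List.replicate_succ, h, ih]

lemma flatMap_const0 (σ : ℕ → List ℕ) :
    ∀ u : List ℕ, (∀ w ∈ u, σ w = [0]) → u.flatMap σ = List.replicate u.length 0 := by
  intro u
  induction u with
  | nil => simp
  | cons a t ih =>
    intro h
    simp [h a (by simp), ih (fun w hw => h w (by simp [hw])), List.replicate_succ]

lemma peel {x y : ℕ} (hxy : y ≠ x) :
    ∀ (a b : ℕ) {l l' : List ℕ},
      replicate a x ++ y :: l = replicate b x ++ y :: l' → a = b ∧ l = l' := by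
  intro a
  induction a with
  | zero =>
    intro b l l' h
    cases b with
    | zero => simpa using h
    | succ b => simp [replicate_succ] at h; exact absurd h.1 hxy
  | succ a ih =>
    intro b l l' h
    cases b with
    | zero => simp [replicate_succ] at h; exact absurd h.1.symm hxy
    | succ b =>
      simp only [replicate_succ, cons_append, cons.injEq] at h
      obtain ⟨hab, hl⟩ := ih b h.2
      exact ⟨by omega, hl⟩

lemma after_y {x y : ℕ} (hxy : x ≠ y) :
    ∀ (g1 : ℕ) {g2 : ℕ} {α β : List ℕ},
      replicate g1 x ++ replicate g2 y = α ++ y :: β → ∀ z ∈ β, z = y := by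
  intro g1
  induction g1 with
  | zero =>
    intro g2 α β h z hz
    refine eq_of_mem_replicate (a := y) (n := g2) ?_
    rw [show replicate g2 y = α ++ y :: β by simpa using h]
    exact mem_append_right _ (mem_cons_of_mem _ hz)
  | succ g1 ih =>
    intro g2 α β h z hz
    cases α with
    | nil =>
      simp [replicate_succ] at h
      exact absurd h.1 hxy
    | cons a α' =>
      simp only [replicate_succ, cons_append, cons.injEq] at h
      exact ih h.2 z hz

lemma no_sep {x y : ℕ} (hxy : y ≠ x) {a m : ℕ} {l : List ℕ} {e1 e2 e3 : ℕ}
    (h : replicate a x ++ y :: (replicate (m + 1) x ++ y :: l)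
       = replicate e1 x ++ (replicate e2 y ++ replicate e3 x)) : False := by
  cases e2 with
  | zero =>
    have hy : y ∈ replicate e1 x ++ (replicate (0:ℕ) y ++ replicate e3 x) := by
      rw [← h]; simp
    simp only [replicate_zero, nil_append, mem_append] at hy
    exact hxy (hy.elim eq_of_mem_replicate eq_of_mem_replicate)
  | succ e2 =>
    rw [show replicate (e2+1) y ++ replicate e3 x
        = y :: (replicate e2 y ++ replicate e3 x) by simp [replicate_succ]] at h
    have h2 := (peel hxy _ _ h).2
    cases e2 with
    | zero =>
      have hy : y ∈ replicate e3 x := by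
        rw [show replicate e3 x = replicate (0:ℕ) y ++ replicate e3 x by simp, ← h2]
        simp
      exact hxy (eq_of_mem_replicate hy)
    | succ e2 =>
      rw [show replicate (e2+1) y ++ replicate e3 x
          = y :: (replicate e2 y ++ replicate e3 x) by simp [replicate_succ]] at h2
      rw [show replicate (m+1) x ++ y :: l = x :: (replicate m x ++ y :: l) by
        simp [replicate_succ]] at h2
      exact hxy (List.cons.inj h2).1.symm

def flatE (L : List (ℕ × ℕ)) : List ℕ := L.flatMap (fun p => List.replicate p.2 p.1)

lemma flatE_cons (p : ℕ × ℕ) (L : List (ℕ × ℕ)) :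
    flatE (p :: L) = replicate p.2 p.1 ++ flatE L := by simp [flatE]

lemma flatE_ne_nil {L : List (ℕ × ℕ)} (hpos : ∀ p ∈ L, 0 < p.2) (hL : L ≠ []) :
    flatE L ≠ [] := by
  cases L with
  | nil => exact absurd rfl hL
  | cons p L =>
    have hp := hpos p mem_cons_self
    rw [flatE_cons]
    intro h
    rcases List.append_eq_nil_iff.mp h with ⟨h1, -⟩
    have := congrArg length h1
    simp at this
    omega

lemma rle_unique : ∀ L L' : List (ℕ × ℕ),
    (∀ p ∈ L, 0 < p.2) → (∀ p ∈ L', 0 < p.2) →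
    L.Chain' (fun p q => p.1 ≠ q.1) → L'.Chain' (fun p q => p.1 ≠ q.1) →
    flatE L = flatE L' → L = L' := by
  intro L
  induction L with
  | nil =>
    intro L' _ hpos' _ _ h
    by_contra hne
    exact flatE_ne_nil hpos' (fun h' => hne h'.symm) (by simpa [flatE] using h.symm)
  | cons p L ih =>
    intro L' hpos hpos' hch hch' h
    cases L' with
    | nil =>
      exact absurd (by simpa [flatE] using h)
        (flatE_ne_nil (fun q hq => hpos q hq) (by simp))
    | cons q L₂ =>
      obtain ⟨a, m⟩ := p
      obtain ⟨b, n⟩ := q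
      have hm : 0 < m := hpos (a, m) (by simp)
      have hn : 0 < n := hpos' (b, n) (by simp)
      obtain ⟨m', rfl⟩ : ∃ m', m = m' + 1 := ⟨m - 1, by omega⟩
      obtain ⟨n', rfl⟩ : ∃ n', n = n' + 1 := ⟨n - 1, by omega⟩
      rw [flatE_cons, flatE_cons] at h
      simp only [replicate_succ, cons_append] at h
      obtain ⟨hab, htail⟩ := List.cons.inj h
      subst hab
      have hmn : m' = n' := by
        rcases Nat.lt_trichotomy m' n' with hlt | heq | hgt
        · exfalso
          rw [show n' = m' + ((n' - m' - 1) + 1) by omega, replicate_add, append_assoc] at htail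
          have h2 := append_cancel_left htail
          cases L with
          | nil =>
            have : (0:ℕ) = _ := congrArg length h2
            simp [flatE] at this
            omega
          | cons r L₃ =>
            obtain ⟨c, k⟩ := r
            have hk : 0 < k := hpos (c, k) (by simp)
            obtain ⟨k', rfl⟩ : ∃ k', k = k' + 1 := ⟨k - 1, by omega⟩
            rw [flatE_cons] at h2
            simp only [replicate_succ, cons_append] at h2
            have hca : c = a := (List.cons.inj h2).1
            have : a ≠ c := (isChain_cons_cons.mp hch).1
            exact this hca.symm
        · exact heq
        · exfalso
          rw [show m' = n' + ((m' - n' - 1) + 1) by omega, replicate_add, append_assoc] at htail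
          have h2 := (append_cancel_left htail.symm)
          cases L₂ with
          | nil =>
            have : (0:ℕ) = _ := congrArg length h2
            simp [flatE] at this
            omega
          | cons r L₃ =>
            obtain ⟨c, k⟩ := r
            have hk : 0 < k := hpos' (c, k) (by simp)
            obtain ⟨k', rfl⟩ : ∃ k', k = k' + 1 := ⟨k - 1, by omega⟩
            rw [flatE_cons] at h2
            simp only [replicate_succ, cons_append] at h2
            have hca : c = a := (List.cons.inj h2).1
            have : a ≠ c := (isChain_cons_cons.mp hch').1
            exact this hca.symm
      subst hmn
      have htail2 : flatE L = flatE L₂ := append_cancel_left htail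
      have := ih L₂ (fun p hp => hpos p (by simp [hp])) (fun p hp => hpos' p (by simp [hp]))
        hch.tail hch'.tail htail2
      rw [this]

lemma sameType_shape {u v : List ℕ} (h : SameType u v) {Lu : List (ℕ × ℕ)}
    (hpos : ∀ p ∈ Lu, 0 < p.2) (hch : Lu.Chain' (fun p q => p.1 ≠ q.1))
    (hu : u = flatE Lu) :
    ∃ Lv : List (ℕ × ℕ), Lv.map Prod.fst = Lu.map Prod.fst ∧
      (∀ p ∈ Lv, 0 < p.2) ∧ v = flatE Lv := by
  obtain ⟨L, hLpos, hLch, hu', hv'⟩ := h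
  have h1 : L.map (fun p => (p.1, p.2.1)) = Lu := by
    apply rle_unique
    · rintro p hp
      obtain ⟨q, hq, rfl⟩ := mem_map.mp hp
      exact (hLpos q hq).1
    · exact hpos
    · exact (isChain_map _).mpr hLch
    · exact hch
    · rw [← hu, hu']
      simp [flatE, List.flatMap_map]
  refine ⟨L.map (fun p => (p.1, p.2.2)), ?_, ?_, ?_⟩
  · rw [← h1]; simp
  · rintro p hp
    obtain ⟨q, hq, rfl⟩ := mem_map.mp hp
    exact (hLpos q hq).2
  · rw [hv']; simp [flatE, List.flatMap_map]

lemma shape1 {v : List ℕ} {x : ℕ} {a : ℕ} (ha : 0 < a)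
    (h : SameType (replicate a x) v) :
    ∃ n, 0 < n ∧ v = replicate n x := by
  obtain ⟨Lv, hmap, hpos, hv⟩ := sameType_shape h (Lu := [(x, a)])
    (by simpa using ha) (by simp [List.Chain', isChain_singleton]) (by simp [flatE])
  rcases Lv with _ | ⟨p, _ | ⟨q, L⟩⟩ <;> simp at hmap
  exact ⟨p.2, hpos p (by simp), by simp [hv, flatE, hmap]⟩

lemma shape2 {v : List ℕ} {x y : ℕ} {a b : ℕ} (ha : 0 < a) (hb : 0 < b) (hxy : x ≠ y)
    (h : SameType (replicate a x ++ replicate b y) v) :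
    ∃ n1 n2, 0 < n1 ∧ 0 < n2 ∧ v = replicate n1 x ++ replicate n2 y := by
  obtain ⟨Lv, hmap, hpos, hv⟩ := sameType_shape h (Lu := [(x, a), (y, b)])
    (by simp; omega) (by simp [List.Chain', hxy, isChain_cons_cons]) (by simp [flatE])
  rcases Lv with _ | ⟨p, _ | ⟨q, _ | ⟨r, L⟩⟩⟩ <;> simp at hmap
  obtain ⟨hp, hq⟩ := hmap
  exact ⟨p.2, q.2, hpos p (by simp), hpos q (by simp), by simp [hv, flatE, hp, hq]⟩

lemma shape3 {v : List ℕ} {x y : ℕ} {a b c : ℕ} (ha : 0 < a) (hb : 0 < b) (hc : 0 < c)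
    (hxy : x ≠ y)
    (h : SameType (replicate a x ++ (replicate b y ++ replicate c x)) v) :
    ∃ n1 n2 n3, 0 < n1 ∧ 0 < n2 ∧ 0 < n3 ∧
      v = replicate n1 x ++ (replicate n2 y ++ replicate n3 x) := by
  obtain ⟨Lv, hmap, hpos, hv⟩ := sameType_shape h (Lu := [(x, a), (y, b), (x, c)])
    (by simp; omega) (by simp [List.Chain', hxy, Ne.symm hxy, isChain_cons_cons]) (by simp [flatE])
  rcases Lv with _ | ⟨p, _ | ⟨q, _ | ⟨r, _ | ⟨s, L⟩⟩⟩⟩ <;> simp at hmap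
  obtain ⟨hp, hq, hr⟩ := hmap
  exact ⟨p.2, q.2, r.2, hpos p (by simp), hpos q (by simp), hpos r (by simp),
    by simp [hv, flatE, hp, hq, hr]⟩

lemma destutter_rep {α : Type*} [DecidableEq α] (x : α) (l : List α) :
    ∀ a : ℕ, (List.replicate (a + 1) x ++ l).destutter (· ≠ ·) = (x :: l).destutter (· ≠ ·) := by
  intro a
  induction a with
  | zero => simp
  | succ a ih =>
    rw [show replicate (a + 2) x ++ l = x :: x :: (replicate a x ++ l) by
      simp [replicate_succ]]
    rw [destutter_cons_cons, if_neg (by simp)]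
    rw [← destutter_cons']
    rw [show x :: (replicate a x ++ l) = replicate (a+1) x ++ l by simp [replicate_succ]]
    exact ih

lemma height_rep {x : ℕ} {a : ℕ} (ha : 0 < a) : height (replicate a x) ≤ 3 := by
  obtain ⟨a', rfl⟩ : ∃ a', a = a' + 1 := ⟨a - 1, by omega⟩
  unfold height
  rw [show replicate (a'+1) x = replicate (a'+1) x ++ [] by simp, destutter_rep]
  simp [destutter_singleton]

lemma height_le3 {x y : ℕ} (hxy : x ≠ y) {a b : ℕ} (c : ℕ) (ha : 0 < a) (hb : 0 < b) :
    height (replicate a x ++ (replicate b y ++ replicate c x)) ≤ 3 := by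
  obtain ⟨a', rfl⟩ : ∃ a', a = a' + 1 := ⟨a - 1, by omega⟩
  obtain ⟨b', rfl⟩ : ∃ b', b = b' + 1 := ⟨b - 1, by omega⟩
  unfold height
  rw [destutter_rep]
  rw [show x :: (replicate (b'+1) y ++ replicate c x)
      = x :: y :: (replicate b' y ++ replicate c x) by simp [replicate_succ]]
  rw [destutter_cons_cons, if_pos hxy, ← destutter_cons']
  rw [show y :: (replicate b' y ++ replicate c x) = replicate (b'+1) y ++ replicate c x by
    simp [replicate_succ]]
  rw [destutter_rep]
  cases c with
  | zero => simp [destutter_singleton]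
  | succ c =>
    rw [show y :: replicate (c+1) x = y :: x :: replicate c x by simp [replicate_succ]]
    rw [destutter_cons_cons, if_pos (Ne.symm hxy), ← destutter_cons']
    rw [show x :: replicate c x = replicate (c+1) x ++ [] by simp [replicate_succ]]
    rw [destutter_rep]
    simp [destutter_singleton]

end Aux

section Subs

def sB : ℕ → List ℕ := fun w => if w = 1 then [1] else [0]
def sC : ℕ → List ℕ := fun w => if w = 2 then [2] else [0]
def sD : ℕ → List ℕ := fun w => if w = 1 then [1] else if w = 2 then [2] else []
def sS : ℕ → List ℕ := fun w => if w = 1 then [1, 0] else [0]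
def sT : ℕ → List ℕ := fun w => if w = 2 then [2, 0] else [0]
def sA : ℕ → List ℕ := fun w => if w = 0 then [0] else [1]

def pB : ℕ → ℕ := fun w => if w = 1 then 1 else 0
def pC : ℕ → ℕ := fun w => if w = 2 then 2 else 0

lemma flatMap_pure (f : ℕ → ℕ) : ∀ l : List ℕ, (l.flatMap fun w => [f w]) = l.map f := by
  intro l; induction l with
  | nil => simp
  | cons a t ih => simp [ih]

lemma flatMap_sB (l : List ℕ) : l.flatMap sB = l.map pB := by
  rw [← flatMap_pure]
  congr 1
  funext w
  by_cases h : w = 1 <;> simp [sB, pB, h]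

lemma flatMap_sC (l : List ℕ) : l.flatMap sC = l.map pC := by
  rw [← flatMap_pure]
  congr 1
  funext w
  by_cases h : w = 2 <;> simp [sC, pC, h]

end Subs

lemma stepA {M : Type*} [Monoid M] (hC : PropC M 3) {u v : List ℕ} (hsat : SatM M u v)
    (hu0 : u ≠ []) (huz : ∀ w ∈ u, w = 0 ∨ w = 1 ∨ w = 2) :
    ∀ z ∈ v, z = 0 ∨ z = 1 ∨ z = 2 := by
  intro z hz
  by_contra hzn
  push_neg at hzn
  obtain ⟨hz0, hz1, hz2⟩ := hzn
  set σ : ℕ → List ℕ := fun w => if w = z then [z] else [0] with hσ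
  have himg : u.flatMap σ = replicate u.length 0 := by
    apply flatMap_const0
    intro w hw
    have hor := huz w hw
    have hwz : w ≠ z := by rcases hor with rfl | rfl | rfl <;> omega
    simp [hσ, hwz]
  have hlen : 0 < u.length := length_pos_iff.mpr hu0
  have hst : SameType (u.flatMap σ) (v.flatMap σ) := by
    apply hC 0 z (fun h => hz0 h.symm)
    · rw [himg]
      intro h
      have h0 := congrArg length h
      simp only [length_replicate, length_nil] at h0
      omega
    · intro w hw
      rw [himg] at hw
      exact Or.inl (eq_of_mem_replicate hw)
    · rw [himg]; exact height_rep hlen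
    · exact satM_subst hsat σ
  rw [himg] at hst
  obtain ⟨n, hn, hv'⟩ := shape1 hlen hst
  have hzmem : z ∈ v.flatMap σ := mem_flatMap.mpr ⟨z, hz, by simp [hσ]⟩
  rw [hv'] at hzmem
  exact hz0 (eq_of_mem_replicate hzmem)

theorem stmt8 (M : Type*) [Monoid M] (hC : PropC M 3)
    (m₁ m₂ m₃ : ℕ) (h₁ : 1 ≤ m₁) (h₂ : 1 ≤ m₂) (h₃ : 1 ≤ m₃) (v : List ℕ)
    (hsat : SatM M
      (List.replicate m₁ 0 ++ 1 :: List.replicate m₂ 0 ++ 2 :: List.replicate m₃ 0) v) :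
    ∃ n₁ n₂ n₃, 1 ≤ n₁ ∧ 1 ≤ n₂ ∧ 1 ≤ n₃ ∧
      v = List.replicate n₁ 0 ++ 1 :: List.replicate n₂ 0 ++ 2 :: List.replicate n₃ 0 := by
  set U : List ℕ :=
    List.replicate m₁ 0 ++ 1 :: List.replicate m₂ 0 ++ 2 :: List.replicate m₃ 0 with hU
  have hUmem : ∀ w ∈ U, w = 0 ∨ w = 1 ∨ w = 2 := by
    intro w hw
    simp only [hU, mem_append, mem_cons, mem_replicate] at hw
    omega
  have hUne : U ≠ [] := by
    intro h
    have h0 := congrArg length h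
    simp only [hU, length_append, length_cons, length_replicate, length_nil] at h0
    omega
  have hA : ∀ z ∈ v, z = 0 ∨ z = 1 ∨ z = 2 := stepA hC hsat hUne hUmem
  -- Step B : letter 1
  have huB : U.flatMap sB = replicate m₁ 0 ++ (replicate 1 1 ++ replicate (m₂ + (1 + m₃)) 0) := by
    simp [hU, sB, flatMap_append, flatMap_cons, flatMap_rep sB (a := 0) (b := 0) rfl,
      replicate_add, append_assoc]
  have hsatB := satM_subst hsat sB
  rw [huB] at hsatB
  have hstB : SameType (replicate m₁ 0 ++ (replicate 1 1 ++ replicate (m₂ + (1 + m₃)) 0))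
      (v.flatMap sB) := by
    apply hC 0 1 (by norm_num)
    · intro h
      have h0 := congrArg length h
      simp only [length_append, length_replicate, length_nil] at h0
      omega
    · intro w hw
      simp only [mem_append, mem_replicate] at hw
      omega
    · exact height_le3 (by norm_num) _ (by omega) (by norm_num)
    · exact hsatB
  obtain ⟨e1, e2, e3, he1, he2, he3, hvB⟩ :=
    shape3 (by omega) (by norm_num) (by omega) (by norm_num) hstB
  rw [flatMap_sB] at hvB
  obtain ⟨b1, rest, hvsp, hb1, hrest⟩ := map_eq_append_iff.mp hvB
  obtain ⟨b2, b3, hrsp, hb2, hb3⟩ := map_eq_append_iff.mp hrest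
  have hb1len : b1.length = e1 := by
    have := congrArg length hb1; simpa using this
  have hb1f : ∀ w ∈ b1, w ≠ 1 := by
    intro w hw h1
    have hw0 : pB w = 0 := eq_of_mem_replicate (by rw [← hb1]; exact mem_map_of_mem hw)
    simp [pB, h1] at hw0
  have hb3f : ∀ w ∈ b3, w ≠ 1 := by
    intro w hw h1
    have hw0 : pB w = 0 := eq_of_mem_replicate (by rw [← hb3]; exact mem_map_of_mem hw)
    simp [pB, h1] at hw0
  have hb2eq : b2 = replicate e2 1 := by
    have hlen : b2.length = e2 := by have := congrArg length hb2; simpa using this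
    refine eq_replicate_iff.mpr ⟨hlen, ?_⟩
    intro w hw
    have hw1 : pB w = 1 := eq_of_mem_replicate (by rw [← hb2]; exact mem_map_of_mem hw)
    by_contra h1
    simp [pB, h1] at hw1
  subst hb2eq
  subst hrsp
  -- Step C : letter 2
  have huC : U.flatMap sC
      = replicate (m₁ + (1 + m₂)) 0 ++ (replicate 1 2 ++ replicate m₃ 0) := by
    simp [hU, sC, flatMap_append, flatMap_cons, flatMap_rep sC (a := 0) (b := 0) rfl,
      replicate_add, append_assoc]
  have hsatC := satM_subst hsat sC
  rw [huC] at hsatC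
  have hstC : SameType (replicate (m₁ + (1 + m₂)) 0 ++ (replicate 1 2 ++ replicate m₃ 0))
      (v.flatMap sC) := by
    apply hC 0 2 (by norm_num)
    · intro h
      have h0 := congrArg length h
      simp only [length_append, length_replicate, length_nil] at h0
      omega
    · intro w hw
      simp only [mem_append, mem_replicate] at hw
      omega
    · exact height_le3 (by norm_num) _ (by omega) (by norm_num)
    · exact hsatC
  obtain ⟨f1, f2, f3, hf1, hf2, hf3, hvC⟩ :=
    shape3 (by omega) (by norm_num) (by omega) (by norm_num) hstC
  rw [flatMap_sC] at hvC
  obtain ⟨d1, restC, hvspC, hd1, hrestC⟩ := map_eq_append_iff.mp hvC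
  obtain ⟨d2, d3, hrspC, hd2, hd3⟩ := map_eq_append_iff.mp hrestC
  have hd3len : d3.length = f3 := by
    have := congrArg length hd3; simpa using this
  have hd1f : ∀ w ∈ d1, w ≠ 2 := by
    intro w hw h1
    have hw0 : pC w = 0 := eq_of_mem_replicate (by rw [← hd1]; exact mem_map_of_mem hw)
    simp [pC, h1] at hw0
  have hd3f : ∀ w ∈ d3, w ≠ 2 := by
    intro w hw h1
    have hw0 : pC w = 0 := eq_of_mem_replicate (by rw [← hd3]; exact mem_map_of_mem hw)
    simp [pC, h1] at hw0
  have hd2eq : d2 = replicate f2 2 := by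
    have hlen : d2.length = f2 := by have := congrArg length hd2; simpa using this
    refine eq_replicate_iff.mpr ⟨hlen, ?_⟩
    intro w hw
    have hw1 : pC w = 2 := eq_of_mem_replicate (by rw [← hd2]; exact mem_map_of_mem hw)
    by_contra h1
    simp [pC, h1] at hw1
  subst hd2eq
  subst hrspC
  -- Step D : relative order of 1 and 2
  have huD : U.flatMap sD = replicate 1 1 ++ replicate 1 2 := by
    simp [hU, sD, flatMap_append, flatMap_cons, flatMap_rep_nil sD (a := 0) rfl]
  have hsatD := satM_subst hsat sD
  rw [huD] at hsatD
  have hstD : SameType (replicate 1 1 ++ replicate 1 2) (v.flatMap sD) := by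
    apply hC 1 2 (by norm_num)
    · simp
    · intro w hw
      simp only [mem_append, mem_replicate] at hw
      omega
    · rw [show (replicate 1 1 ++ replicate 1 2 : List ℕ)
          = replicate 1 1 ++ (replicate 1 2 ++ replicate 0 1) by simp]
      exact height_le3 (by norm_num) _ (by norm_num) (by norm_num)
    · exact hsatD
  obtain ⟨g1, g2, hg1, hg2, hvD⟩ := shape2 (by norm_num) (by norm_num) (by norm_num) hstD
  -- b1 consists of zeros
  have hb1zero : ∀ w ∈ b1, w = 0 := by
    intro w hw
    rcases hA w (by rw [hvsp]; exact mem_append_left _ hw) with rfl | h1 | h2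
    · rfl
    · exact absurd h1 (hb1f w hw)
    · exfalso
      subst h2
      obtain ⟨α, β, hb1s⟩ := append_of_mem hw
      have himg : v.flatMap sD
          = α.flatMap sD ++ 2 :: (β.flatMap sD ++ (replicate e2 1 ++ b3.flatMap sD)) := by
        rw [hvsp, hb1s]
        simp [sD, flatMap_append, flatMap_cons, flatMap_rep sD (a := 1) (b := 1) rfl,
          append_assoc]
      have hall := after_y (x := 1) (y := 2) (by norm_num) g1 (hvD.symm.trans himg)
      have h12 := hall 1 (mem_append_right _
        (mem_append_left _ (mem_replicate.mpr ⟨by omega, rfl⟩)))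
      norm_num at h12
  have hb1eq : b1 = replicate e1 0 := eq_replicate_iff.mpr ⟨hb1len, hb1zero⟩
  -- d3 consists of zeros
  have hd3zero : ∀ w ∈ d3, w = 0 := by
    intro w hw
    rcases hA w (by rw [hvspC]; exact mem_append_right _ (mem_append_right _ hw)) with
      rfl | h1 | h2
    · rfl
    · exfalso
      subst h1
      obtain ⟨α, β, hd3s⟩ := append_of_mem hw
      obtain ⟨f2', rfl⟩ : ∃ k, f2 = k + 1 := ⟨f2 - 1, by omega⟩
      have himg : v.flatMap sD
          = d1.flatMap sD ++ 2 :: (replicate f2' 2 ++ (α.flatMap sD ++ 1 :: β.flatMap sD)) := by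
        rw [hvspC, hd3s]
        simp [sD, flatMap_append, flatMap_cons, flatMap_rep sD (a := 2) (b := 2) rfl,
          replicate_succ, append_assoc]
      have hall := after_y (x := 1) (y := 2) (by norm_num) g1 (hvD.symm.trans himg)
      have h12 := hall 1 (mem_append_right _
        (mem_append_right _ mem_cons_self))
      norm_num at h12
    · exact absurd h2 (hd3f w hw)
  have hd3eq : d3 = replicate f3 0 := eq_replicate_iff.mpr ⟨hd3len, hd3zero⟩
  -- prefix comparison
  have hp1 : (b1 ++ replicate e2 1) <+: v := ⟨b3, by rw [hvsp, append_assoc]⟩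
  have hp2 : d1 <+: v := ⟨replicate f2 2 ++ d3, hvspC.symm⟩
  have hkey : ∃ c2, v = replicate e1 0 ++
      (replicate e2 1 ++ (replicate c2 0 ++ (replicate f2 2 ++ replicate f3 0))) := by
    rcases prefix_or_prefix_of_prefix hp1 hp2 with ⟨w2, hw2⟩ | ⟨r, hr⟩
    · -- b1 ++ 1^e2 is a prefix of d1
      have hb3eq : b3 = w2 ++ (replicate f2 2 ++ d3) := by
        have hh : b1 ++ (replicate e2 1 ++ b3)
            = b1 ++ (replicate e2 1 ++ (w2 ++ (replicate f2 2 ++ d3))) := by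
          rw [← hvsp, hvspC, ← hw2]
          simp [append_assoc]
        exact append_cancel_left (append_cancel_left hh)
      have hw2zero : ∀ w ∈ w2, w = 0 := by
        intro w hw
        have hwb3 : w ∈ b3 := by rw [hb3eq]; exact mem_append_left _ hw
        have hwd1 : w ∈ d1 := by rw [← hw2]; exact mem_append_right _ hw
        rcases hA w (by rw [hvsp]; exact mem_append_right _ (mem_append_right _ hwb3)) with
          rfl | h1 | h2
        · rfl
        · exact absurd h1 (hb3f w hwb3)
        · exact absurd h2 (hd1f w hwd1)
      have hw2eq : w2 = replicate w2.length 0 := eq_replicate_iff.mpr ⟨rfl, hw2zero⟩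
      refine ⟨w2.length, ?_⟩
      rw [hvsp, hb3eq]
      rw [hb1eq, hd3eq]
      rw [show w2 = replicate w2.length 0 from hw2eq]
      simp
    · -- d1 is a prefix of b1 ++ 1^e2
      have hrb : r ++ b3 = replicate f2 2 ++ d3 := by
        have hh : d1 ++ (r ++ b3) = d1 ++ (replicate f2 2 ++ d3) := by
          rw [← hvspC, ← append_assoc, hr, hvsp]
          simp [append_assoc]
        exact append_cancel_left hh
      cases r with
      | nil =>
        have hd1eq : d1 = b1 ++ replicate e2 1 := by simpa using hr
        refine ⟨0, ?_⟩
        rw [hvspC, hd1eq, hb1eq, hd3eq]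
        simp only [nil_append] at hrb
        simp [hrb, append_assoc]
      | cons h t =>
        exfalso
        obtain ⟨f2', rfl⟩ : ∃ k, f2 = k + 1 := ⟨f2 - 1, by omega⟩
        have hh2 : h = 2 := by
          rw [replicate_succ] at hrb
          exact (List.cons.inj (by simpa using hrb)).1
        have hmem : h ∈ b1 ++ replicate e2 1 := by
          rw [← hr]; exact mem_append_right _ mem_cons_self
        rcases mem_append.mp hmem with hmb | hmr
        · have := hb1zero h hmb; omega
        · have := eq_of_mem_replicate hmr; omega
  obtain ⟨c2, hvform⟩ := hkey
  -- pin e2 = 1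
  have he2eq : e2 = 1 := by
    by_contra hne
    obtain ⟨k, rfl⟩ : ∃ k, e2 = k + 2 := ⟨e2 - 2, by omega⟩
    have huS : U.flatMap sS
        = replicate m₁ 0 ++ (replicate 1 1 ++ replicate (1 + (m₂ + (1 + m₃))) 0) := by
      simp [hU, sS, flatMap_append, flatMap_cons, flatMap_rep sS (a := 0) (b := 0) rfl,
        replicate_add, append_assoc]
    have hsatS := satM_subst hsat sS
    rw [huS] at hsatS
    have hstS : SameType
        (replicate m₁ 0 ++ (replicate 1 1 ++ replicate (1 + (m₂ + (1 + m₃))) 0))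
        (v.flatMap sS) := by
      apply hC 0 1 (by norm_num)
      · intro h
        have h0 := congrArg length h
        simp only [length_append, length_replicate, length_nil] at h0
        omega
      · intro w hw
        simp only [mem_append, mem_replicate] at hw
        omega
      · exact height_le3 (by norm_num) _ (by omega) (by norm_num)
      · exact hsatS
    obtain ⟨E1, E2, E3, hE1, hE2, hE3, hvS⟩ :=
      shape3 (by omega) (by norm_num) (by omega) (by norm_num) hstS
    have hvimg : v.flatMap sS = replicate e1 0 ++ 1 :: (replicate (0 + 1) 0 ++ 1 ::
        (0 :: ((replicate k 1).flatMap sS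
          ++ (replicate c2 0 ++ (replicate f2 2 ++ replicate f3 0)).flatMap sS))) := by
      rw [hvform]
      simp [sS, flatMap_append, flatMap_cons, flatMap_rep sS (a := 0) (b := 0) rfl,
        replicate_succ, append_assoc]
    exact no_sep (by norm_num) (hvimg.symm.trans hvS)
  subst he2eq
  -- pin f2 = 1
  have hf2eq : f2 = 1 := by
    by_contra hne
    obtain ⟨k, rfl⟩ : ∃ k, f2 = k + 2 := ⟨f2 - 2, by omega⟩
    have huT : U.flatMap sT
        = replicate (m₁ + (1 + m₂)) 0 ++ (replicate 1 2 ++ replicate (1 + m₃) 0) := by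
      simp [hU, sT, flatMap_append, flatMap_cons, flatMap_rep sT (a := 0) (b := 0) rfl,
        replicate_add, append_assoc]
    have hsatT := satM_subst hsat sT
    rw [huT] at hsatT
    have hstT : SameType
        (replicate (m₁ + (1 + m₂)) 0 ++ (replicate 1 2 ++ replicate (1 + m₃) 0))
        (v.flatMap sT) := by
      apply hC 0 2 (by norm_num)
      · intro h
        have h0 := congrArg length h
        simp only [length_append, length_replicate, length_nil] at h0
        omega
      · intro w hw
        simp only [mem_append, mem_replicate] at hw
        omega
      · exact height_le3 (by norm_num) _ (by omega) (by norm_num)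
      · exact hsatT
    obtain ⟨E1, E2, E3, hE1, hE2, hE3, hvT⟩ :=
      shape3 (by omega) (by norm_num) (by omega) (by norm_num) hstT
    have hvimg : v.flatMap sT = replicate (e1 + (1 + c2)) 0 ++ 2 :: (replicate (0 + 1) 0 ++ 2 ::
        (0 :: ((replicate k 2).flatMap sT ++ replicate f3 0))) := by
      rw [hvform]
      simp [sT, flatMap_append, flatMap_cons, flatMap_rep sT (a := 0) (b := 0) rfl,
        replicate_succ, replicate_add, append_assoc]
    exact no_sep (by norm_num) (hvimg.symm.trans hvT)
  subst hf2eq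
  -- pin c2 ≥ 1
  have hc2pos : 0 < c2 := by
    by_contra hne
    have hc20 : c2 = 0 := by omega
    subst hc20
    have hvimg : v.flatMap sA = replicate e1 0 ++ (replicate (1 + 1) 1 ++ replicate f3 0) := by
      rw [hvform]
      simp [sA, flatMap_append, flatMap_cons, flatMap_rep sA (a := 0) (b := 0) rfl,
        replicate_add, append_assoc]
    have hsatA := satM_subst (satM_symm hsat) sA
    rw [hvimg] at hsatA
    have hstA : SameType (replicate e1 0 ++ (replicate (1 + 1) 1 ++ replicate f3 0))
        (U.flatMap sA) := by
      apply hC 0 1 (by norm_num)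
      · intro h
        have h0 := congrArg length h
        simp only [length_append, length_replicate, length_nil] at h0
        omega
      · intro w hw
        simp only [mem_append, mem_replicate] at hw
        omega
      · exact height_le3 (by norm_num) _ (by omega) (by norm_num)
      · exact hsatA
    obtain ⟨E1, E2, E3, hE1, hE2, hE3, huSh⟩ :=
      shape3 (by omega) (by norm_num) (by omega) (by norm_num) hstA
    obtain ⟨j, rfl⟩ : ∃ j, m₂ = j + 1 := ⟨m₂ - 1, by omega⟩
    have huimg : U.flatMap sA
        = replicate m₁ 0 ++ 1 :: (replicate (j + 1) 0 ++ 1 :: replicate m₃ 0) := by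
      simp [hU, sA, flatMap_append, flatMap_cons, flatMap_rep sA (a := 0) (b := 0) rfl,
        append_assoc]
    exact no_sep (by norm_num) (huimg.symm.trans huSh)
  refine ⟨e1, c2, f3, he1, hc2pos, hf3, ?_⟩
  rw [hvform]
  simp [append_assoc]
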